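/- Let 𝔽 be a field with algebraic closure 𝔽̄ and let A(z) ∈ Mat_{n×m}(𝔽[z]) with n ≤ m. Then the 𝔽[z]-linear map A(z) : 𝔽[z]^m → 𝔽[z]^n is surjective if and only if for every z₀ ∈ 𝔽̄ the matrix A(z₀) (obtained by evaluating every entry at z₀) has rank n over 𝔽̄. -/

import Mathlib

open Matrix Polynomial

section Aux

variable {K : Type*} [Field K] {n m : ℕ}

/-- If a wide matrix over a field has full row rank, some `n × n` column
submatrix has nonzero determinant. -/
lemma exists_det_submatrix_ne_zero (A : Matrix (Fin n) (Fin m) K) (h : A.rank = n) :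
    ∃ f : Fin n → Fin m, Function.Injective f ∧ (A.submatrix id f).det ≠ 0 := by
  have hspan : Submodule.span K (Set.range Aᵀ) = ⊤ := by
    apply Submodule.eq_top_of_finrank_eq
    rw [show Set.range Aᵀ = Set.range A.col from rfl, ← Matrix.range_mulVecLin]
    rw [Matrix.rank] at h
    rw [h, Module.finrank_pi]
    simp
  obtain ⟨b, hbsub, hbspan, hbind⟩ := exists_linearIndependent K (Set.range Aᵀ)
  rw [hspan] at hbspan
  have hb : ⊤ ≤ Submodule.span K (Set.range ((↑) : b → (Fin n → K))) := by
    rw [Subtype.range_coe, hbspan]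
  let bas : Module.Basis b K (Fin n → K) := Module.Basis.mk hbind hb
  haveI : Fintype b := FiniteDimensional.fintypeBasisIndex bas
  have hcard : Fintype.card b = n := by
    have := Module.finrank_eq_card_basis bas
    rw [Module.finrank_pi] at this
    simpa using this.symm
  let e : Fin n ≃ b := (Fintype.equivFinOfCardEq hcard).symm
  have hmem : ∀ i : Fin n, ((e i : Fin n → K)) ∈ Set.range Aᵀ := fun i => hbsub (e i).2
  choose g hg using hmem
  refine ⟨g, ?_, ?_⟩
  · intro i i' hii
    have : ((e i : Fin n → K)) = ((e i' : Fin n → K)) := by rw [← hg i, ← hg i', hii]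
    exact e.injective (Subtype.ext this)
  · have hcols : LinearIndependent K (fun i : Fin n => (A.submatrix id g)ᵀ i) := by
      have : (fun i : Fin n => (A.submatrix id g)ᵀ i) = fun i => ((e i : Fin n → K)) := by
        funext i
        ext j
        simp [Matrix.transpose_apply, Matrix.submatrix_apply, ← hg i, Matrix.transpose_apply]
      rw [this]
      exact hbind.comp e e.injective
    intro hdet
    obtain ⟨v, hv, hmul⟩ := (Matrix.exists_mulVec_eq_zero_iff).2 hdet
    have hinj : Function.Injective (A.submatrix id g).mulVec :=
      Matrix.mulVec_injective_iff.2 hcols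
    exact hv (hinj (by simpa using hmul))

/-- A matrix with a right inverse has full row rank. -/
lemma rank_eq_of_mul_eq_one (A : Matrix (Fin n) (Fin m) K) (B : Matrix (Fin m) (Fin n) K)
    (h : A * B = 1) : A.rank = n := by
  have hsurj : Function.Surjective A.mulVecLin := by
    have : A.mulVecLin ∘ₗ B.mulVecLin = LinearMap.id := by
      rw [← Matrix.mulVecLin_mul, h, Matrix.mulVecLin_one]
    intro v
    exact ⟨B.mulVecLin v, by rw [← LinearMap.comp_apply, this, LinearMap.id_apply]⟩
  rw [Matrix.rank, LinearMap.range_eq_top.2 hsurj, finrank_top, Module.finrank_pi]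
  simp

end Aux

section RightInv

variable {R : Type*} [CommRing R] {n m : ℕ}

/-- Embed the adjugate of a column submatrix back into an `m × n` matrix. -/
noncomputable def extAdj (A : Matrix (Fin n) (Fin m) R) (f : Fin n ↪ Fin m) :
    Matrix (Fin m) (Fin n) R :=
  Matrix.of fun j i => ∑ k : Fin n, if j = f k then (A.submatrix id ⇑f).adjugate k i else 0

lemma mul_extAdj (A : Matrix (Fin n) (Fin m) R) (f : Fin n ↪ Fin m) :
    A * extAdj A f = (A.submatrix id ⇑f).det • 1 := by
  ext i i'
  simp only [Matrix.mul_apply, extAdj, Matrix.of_apply, Finset.mul_sum]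
  rw [Finset.sum_comm]
  have : ∀ k : Fin n, (∑ j : Fin m, A i j * if j = f k then (A.submatrix id ⇑f).adjugate k i' else 0)
      = A (id i) (f k) * (A.submatrix id ⇑f).adjugate k i' := by
    intro k
    rw [Finset.sum_eq_single (f k)]
    · simp
    · intro j _ hj; simp [hj]
    · simp
  simp only [this]
  have := Matrix.mul_adjugate (A.submatrix id ⇑f)
  have h2 := congrFun (congrFun this i) i'
  simpa [Matrix.mul_apply] using h2

lemma exists_right_inverse_of_combination (A : Matrix (Fin n) (Fin m) R)
    (c : (Fin n ↪ Fin m) → R)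
    (hc : ∑ f : Fin n ↪ Fin m, c f * (A.submatrix id ⇑f).det = 1) :
    ∃ B : Matrix (Fin m) (Fin n) R, A * B = 1 := by
  refine ⟨∑ f : Fin n ↪ Fin m, c f • extAdj A f, ?_⟩
  rw [Matrix.mul_sum]
  have : ∀ f : Fin n ↪ Fin m, A * (c f • extAdj A f)
      = (c f * (A.submatrix id ⇑f).det) • (1 : Matrix (Fin n) (Fin n) R) := by
    intro f
    rw [Matrix.mul_smul, mul_extAdj, smul_smul]
  simp only [this, ← Finset.sum_smul, hc, one_smul]

end RightInv

/-- A polynomial matrix `A(z) ∈ Mat_{n×m}(𝔽[z])` with `n ≤ m` defines a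
surjective map `𝔽[z]^m → 𝔽[z]^n` iff for every `z₀` in the algebraic closure
`𝔽̄` the evaluated matrix `A(z₀)` has rank `n`. -/
theorem surjective_iff_rank_eval_algClosure {F : Type*} [Field F] {n m : ℕ}
    (hnm : n ≤ m) (A : Matrix (Fin n) (Fin m) (Polynomial F)) :
    Function.Surjective A.mulVecLin ↔
      ∀ z₀ : AlgebraicClosure F,
        (A.map (fun q => Polynomial.aeval z₀ q)).rank = n := by
  constructor
  · intro hs z₀
    -- build a right inverse B over F[z]
    have hB : ∃ B : Matrix (Fin m) (Fin n) (Polynomial F), A * B = 1 := by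
      refine ⟨Matrix.of fun j i => (hs (Pi.single i 1)).choose j, Matrix.ext fun i i' => ?_⟩
      have hspec := (hs (Pi.single i' 1)).choose_spec
      have h2 := congrFun hspec i
      rw [Matrix.mulVecLin_apply] at h2
      have h3 : (A * Matrix.of fun j i => (hs (Pi.single i 1)).choose j) i i'
          = (A.mulVec ((hs (Pi.single i' 1)).choose)) i := by
        simp [Matrix.mul_apply, Matrix.mulVec, dotProduct]
      rw [h3, h2, Matrix.one_apply, Pi.single_apply]
    obtain ⟨B, hAB⟩ := hB
    have φ : Polynomial F →+* AlgebraicClosure F := (Polynomial.aeval z₀).toRingHom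
    apply rank_eq_of_mul_eq_one _ (B.map fun q => Polynomial.aeval z₀ q)
    have : (A * B).map ((Polynomial.aeval z₀ : Polynomial F →ₐ[F] AlgebraicClosure F) :
        Polynomial F →+* AlgebraicClosure F) = (1 : Matrix (Fin n) (Fin n) (AlgebraicClosure F)) := by
      rw [hAB]; exact Matrix.map_one _ (map_zero _) (map_one _)
    rw [Matrix.map_mul] at this
    exact this
  · intro h
    set I : Ideal (Polynomial F) :=
      Ideal.span (Set.range fun f : Fin n ↪ Fin m => (A.submatrix id ⇑f).det) with hI
    have hItop : I = ⊤ := by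
      by_contra hne
      obtain ⟨M, hMmax, hIM⟩ := Ideal.exists_le_maximal I hne
      obtain ⟨p, hp⟩ := (IsPrincipalIdealRing.principal M).principal
      rw [Ideal.submodule_span_eq] at hp
      have hpnu : ¬ IsUnit p := by
        intro hu
        exact hMmax.ne_top (by rw [hp, Ideal.span_singleton_eq_top.2 hu])
      have hdeg : p.degree ≠ 0 := fun h0 => hpnu (Polynomial.isUnit_iff_degree_eq_zero.2 h0)
      obtain ⟨z₀, hz₀⟩ := IsAlgClosed.exists_aeval_eq_zero (AlgebraicClosure F) p hdeg
      obtain ⟨g, hginj, hgdet⟩ := exists_det_submatrix_ne_zero _ (h z₀)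
      apply hgdet
      have hmem : (A.submatrix id g).det ∈ I := by
        rw [hI]
        exact Ideal.subset_span ⟨⟨g, hginj⟩, rfl⟩
      have hmemM : (A.submatrix id g).det ∈ M := hIM hmem
      rw [hp, Ideal.mem_span_singleton] at hmemM
      obtain ⟨q, hq⟩ := hmemM
      have : ((A.map fun q => Polynomial.aeval z₀ q).submatrix id g)
          = (A.submatrix id g).map (fun q => Polynomial.aeval z₀ q) := by
        rw [Matrix.submatrix_map]
      rw [this]
      have hmap := ((Polynomial.aeval z₀ : Polynomial F →ₐ[F] AlgebraicClosure F) :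
          Polynomial F →+* AlgebraicClosure F).map_det (A.submatrix id g)
      rw [RingHom.mapMatrix_apply] at hmap
      have : ((A.submatrix id g).map fun q => Polynomial.aeval z₀ q)
          = (A.submatrix id g).map ((Polynomial.aeval z₀ : Polynomial F →ₐ[F] AlgebraicClosure F) :
              Polynomial F →+* AlgebraicClosure F) := rfl
      rw [this, ← hmap, hq, _root_.map_mul]
      simp [hz₀]
    have h1 : (1 : Polynomial F) ∈ I := by rw [hItop]; trivial
    rw [hI, Ideal.mem_span_range_iff_exists_fun] at h1
    obtain ⟨c, hc⟩ := h1
    obtain ⟨B, hAB⟩ := exists_right_inverse_of_combination A c hc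
    have : A.mulVecLin ∘ₗ B.mulVecLin = LinearMap.id := by
      rw [← Matrix.mulVecLin_mul, hAB, Matrix.mulVecLin_one]
    intro v
    exact ⟨B.mulVecLin v, by rw [← LinearMap.comp_apply, this, LinearMap.id_apply]⟩
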